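/- Let G be a connected graph and P, P', Q, Q' robust profiles in G. Suppose (A,B) distinguishes P and P' efficiently, (C,D) distinguishes Q and Q' efficiently, and |(A,B)| = |(C,D)|. Then either there is a pair of opposite corner separations of (A,B) and (C,D) with one element efficiently distinguishing P and P' and the other efficiently distinguishing Q and Q', or else there are two pairs of opposite corner separations of (A,B) and (C,D), the first with both elements efficiently distinguishing P and P' and the second with both elements efficiently distinguishing Q and Q'. -/

import Mathlib

/-- A separation of a graph `G`: a pair of vertex sets covering `V` with no edge
between `A ∖ B` and `B ∖ A`. -/
structure GraphSep {V : Type} (G : SimpleGraph V) where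
  A : Set V
  B : Set V
  union_eq : A ∪ B = Set.univ
  no_edge : ∀ a ∈ A \ B, ∀ b ∈ B \ A, ¬ G.Adj a b

namespace GraphSep

variable {V V' : Type} {G : SimpleGraph V} {G' : SimpleGraph V'}

/-- The inverse `(B,A)` of a separation `(A,B)`. -/
def inv (s : GraphSep G) : GraphSep G where
  A := s.B
  B := s.A
  union_eq := by rw [Set.union_comm]; exact s.union_eq
  no_edge := fun a ha b hb h => s.no_edge b hb a ha h.symm

/-- The separator `A ∩ B`. -/
def sepSet (s : GraphSep G) : Set V := s.A ∩ s.B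

/-- The order `|A ∩ B|` of a separation, as an extended natural number. -/
noncomputable def order (s : GraphSep G) : ℕ∞ := (s.A ∩ s.B).encard

/-- `(A,B) ≤ (C,D)` iff `A ⊆ C` and `D ⊆ B`. -/
protected def le (s t : GraphSep G) : Prop := s.A ⊆ t.A ∧ t.B ⊆ s.B

/-- Two separations are nested if after possibly replacing either by its inverse
they are `≤`-comparable. -/
def Nested (s t : GraphSep G) : Prop :=
  s.le t ∨ s.le t.inv ∨ s.inv.le t ∨ s.inv.le t.inv

lemma mem_A_or_B (s : GraphSep G) (x : V) : x ∈ s.A ∨ x ∈ s.B := by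
  have h : x ∈ s.A ∪ s.B := by rw [s.union_eq]; exact Set.mem_univ x
  exact (Set.mem_union _ _ _).1 h

/-- The join `(A,B) ∨ (C,D) = (A ∪ C, B ∩ D)`. -/
def join (s t : GraphSep G) : GraphSep G where
  A := s.A ∪ t.A
  B := s.B ∩ t.B
  union_eq := by
    apply Set.eq_univ_of_forall
    intro x
    rcases s.mem_A_or_B x with h1 | h1
    · exact Or.inl (Or.inl h1)
    · rcases t.mem_A_or_B x with h2 | h2
      · exact Or.inl (Or.inr h2)
      · exact Or.inr ⟨h1, h2⟩
  no_edge := by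
    rintro a ⟨haA, haB⟩ b ⟨hbB, hbA⟩ hadj
    by_cases hsB : a ∈ s.B
    · have hatB : a ∉ t.B := fun h => haB ⟨hsB, h⟩
      have hatA : a ∈ t.A := (t.mem_A_or_B a).resolve_right hatB
      exact t.no_edge a ⟨hatA, hatB⟩ b ⟨hbB.2, fun h => hbA (Or.inr h)⟩ hadj
    · have hasA : a ∈ s.A := (s.mem_A_or_B a).resolve_right hsB
      exact s.no_edge a ⟨hasA, hsB⟩ b ⟨hbB.1, fun h => hbA (Or.inl h)⟩ hadj

/-- The image of a separation under a graph isomorphism. -/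
def map (φ : G ≃g G') (s : GraphSep G) : GraphSep G' where
  A := ⇑φ '' s.A
  B := ⇑φ '' s.B
  union_eq := by
    apply Set.eq_univ_of_forall
    intro y
    rcases s.mem_A_or_B (φ.symm y) with h | h
    · exact Or.inl ⟨φ.symm y, h, φ.apply_symm_apply y⟩
    · exact Or.inr ⟨φ.symm y, h, φ.apply_symm_apply y⟩
  no_edge := by
    rintro a ⟨⟨x, hxA, rfl⟩, haB⟩ b ⟨⟨y, hyB, rfl⟩, hbA⟩ hadj
    exact s.no_edge x ⟨hxA, fun h => haB ⟨x, h, rfl⟩⟩ y ⟨hyB, fun h => hbA ⟨y, h, rfl⟩⟩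
      (φ.map_adj_iff.mp hadj)

/-- The neighbourhood of a set of vertices. -/
def nbhd (G : SimpleGraph V) (X : Set V) : Set V := {v | v ∉ X ∧ ∃ x ∈ X, G.Adj v x}

/-- `w` can be reached from `v` by a walk avoiding `X`. -/
def AvoidReach (G : SimpleGraph V) (X : Set V) (v w : V) : Prop :=
  ∃ p : G.Walk v w, ∀ u ∈ p.support, u ∉ X

/-- `C` is a (connected) component of `G − X`. -/
def IsCompOf (G : SimpleGraph V) (X C : Set V) : Prop :=
  ∃ v, v ∉ X ∧ C = {w | AvoidReach G X v w}

/-- A separation `(A,B)` is tight if each of `A ∖ B` and `B ∖ A` contains a component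
of `G − (A ∩ B)` whose neighbourhood is all of `A ∩ B`. -/
def IsTight (s : GraphSep G) : Prop :=
  (∃ C, IsCompOf G s.sepSet C ∧ nbhd G C = s.sepSet ∧ C ⊆ s.A \ s.B) ∧
  (∃ C, IsCompOf G s.sepSet C ∧ nbhd G C = s.sepSet ∧ C ⊆ s.B \ s.A)

/-- An orientation of `S_k`: it contains only separations of order `< k`, contains
at least one of `s, s⁻¹` for every separation of order `< k`, and contains both only
if they coincide. -/
def IsOrientation (k : ℕ∞) (P : Set (GraphSep G)) : Prop :=
  (∀ s ∈ P, s.order < k) ∧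
  (∀ s : GraphSep G, s.order < k → (s ∈ P ∨ s.inv ∈ P)) ∧
  (∀ s ∈ P, s.inv ∈ P → s.inv = s)

/-- Consistency: no two members `r, s` with distinct underlying separations satisfy
`r⁻¹ ≤ s`. -/
def Consistent (P : Set (GraphSep G)) : Prop :=
  ∀ r ∈ P, ∀ s ∈ P, r.inv.le s → r = s ∨ r = s.inv

/-- A `k`-profile: a consistent orientation of `S_k` satisfying the profile property. -/
def IsProfile (k : ℕ∞) (P : Set (GraphSep G)) : Prop :=
  IsOrientation k P ∧ Consistent P ∧ ∀ s ∈ P, ∀ t ∈ P, (s.join t).inv ∉ P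

/-- A profile in `G` is a `k`-profile for some `k ∈ ℕ ∪ {ℵ₀}`. -/
def IsProfileIn (G : SimpleGraph V) (P : Set (GraphSep G)) : Prop := ∃ k : ℕ∞, IsProfile k P

/-- A profile is regular if it contains no separation of the form `(V, X)`. -/
def RegularP (P : Set (GraphSep G)) : Prop := ∀ s ∈ P, s.A ≠ Set.univ

/-- A profile is bounded if it is a `k`-profile for some finite `k` and is not a subset
of any `ℵ₀`-profile. -/
def BoundedP (P : Set (GraphSep G)) : Prop :=
  (∃ k : ℕ, IsProfile (k : ℕ∞) P) ∧ ∀ Q : Set (GraphSep G), IsProfile ⊤ Q → ¬ P ⊆ Q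

/-- `s` distinguishes the profiles `P` and `P'`. -/
def Distinguishes (s : GraphSep G) (P P' : Set (GraphSep G)) : Prop :=
  (s ∈ P ∧ s.inv ∈ P') ∨ (s.inv ∈ P ∧ s ∈ P')

/-- `s` distinguishes `P` and `P'` efficiently: it has minimum order among all
separations distinguishing `P` and `P'`. -/
def EffDist (s : GraphSep G) (P P' : Set (GraphSep G)) : Prop :=
  Distinguishes s P P' ∧ ∀ t : GraphSep G, Distinguishes t P P' → s.order ≤ t.order

/-- `P` and `P'` are distinguishable: some finite-order separation distinguishes them. -/
def Distinguishable (P P' : Set (GraphSep G)) : Prop :=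
  ∃ s : GraphSep G, s.order < ⊤ ∧ Distinguishes s P P'

/-- Robustness of a profile. -/
def RobustP (P : Set (GraphSep G)) : Prop :=
  ∀ s ∈ P, ∀ t : GraphSep G, t.order < ⊤ →
    (s.join t).order < s.order → (s.join t.inv).order < s.order →
    (s.join t ∈ P ∨ s.join t.inv ∈ P)

/-- A `k`-profile is principal if for every vertex set `X` with `|X| < k` it contains
`(V ∖ C, C ∪ X)` for some component `C` of `G − X`. -/
def PrincipalP (k : ℕ∞) (P : Set (GraphSep G)) : Prop :=
  ∀ X : Set V, X.encard < k →
    ∃ C, IsCompOf G X C ∧ ∃ s ∈ P, s.A = Cᶜ ∧ s.B = C ∪ X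

/-- `c` is a corner separation of `s` and `t`. -/
def IsCornerSep (s t c : GraphSep G) : Prop :=
  ∃ s' ∈ ({s, s.inv} : Set (GraphSep G)), ∃ t' ∈ ({t, t.inv} : Set (GraphSep G)),
    c = s'.join t' ∨ c = (s'.join t').inv

/-- The set `S ⊆ V ∖ {x,y}` separates `x` from `y` in `G`. -/
def SeparatesIn (G : SimpleGraph V) (x y : V) (S : Set V) : Prop :=
  x ∉ S ∧ y ∉ S ∧ ∀ p : G.Walk x y, ∃ u ∈ p.support, u ∈ S

/-- `S` is a `⊆`-minimal `x`–`y`-separator in `G`. -/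
def MinSeparator (G : SimpleGraph V) (x y : V) (S : Set V) : Prop :=
  SeparatesIn G x y S ∧ ∀ S' ⊆ S, SeparatesIn G x y S' → S' = S

/-- The separation of `G` induced by an (oriented) edge of a tree-decomposition. -/
def InducedSep {ι : Type} (T : SimpleGraph ι) (𝒱 : ι → Set V) (x : GraphSep G) : Prop :=
  ∃ t t' : ι, T.Adj t t' ∧
    x.A = (⋃ u ∈ {u : ι | ∃ p : T.Walk u t, s(t, t') ∉ p.edges}, 𝒱 u) ∧
    x.B = (⋃ u ∈ {u : ι | ∃ p : T.Walk u t', s(t, t') ∉ p.edges}, 𝒱 u)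

/-- Opposite pairs of corner separations of `s` and `t`. -/
def OppPair (s t c d : GraphSep G) : Prop :=
  (c = s.join t ∧ d = s.inv.join t.inv) ∨ (c = s.inv.join t.inv ∧ d = s.join t) ∨
  (c = s.join t.inv ∧ d = s.inv.join t) ∨ (c = s.inv.join t ∧ d = s.join t.inv)

end GraphSep

namespace GraphSep

variable {V : Type} {G : SimpleGraph V}

lemma ext' {s t : GraphSep G} (hA : s.A = t.A) (hB : s.B = t.B) : s = t := by
  cases s; cases t; simp_all

@[simp] lemma inv_inv (s : GraphSep G) : s.inv.inv = s := rfl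

@[simp] lemma order_inv (s : GraphSep G) : s.inv.order = s.order := by
  show (s.B ∩ s.A).encard = (s.A ∩ s.B).encard
  rw [Set.inter_comm]

lemma join_comm (s t : GraphSep G) : s.join t = t.join s :=
  ext' (Set.union_comm _ _) (Set.inter_comm _ _)

lemma le_join (s t : GraphSep G) : s.le (s.join t) :=
  ⟨Set.subset_union_left, Set.inter_subset_left⟩

lemma submod (s t : GraphSep G) :
    (s.join t).order + (s.inv.join t.inv).order ≤ s.order + t.order := by
  have key : ∀ X1 X2 S T : Set V, X1 ⊆ S ∪ T → X2 ⊆ S ∪ T → X1 ∩ X2 ⊆ S ∩ T →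
      X1.encard + X2.encard ≤ S.encard + T.encard := by
    intro X1 X2 S T h1 h2 h3
    calc X1.encard + X2.encard
        = (X1 ∪ X2).encard + (X1 ∩ X2).encard :=
          (Set.encard_union_add_encard_inter X1 X2).symm
      _ ≤ (S ∪ T).encard + (S ∩ T).encard :=
          add_le_add (Set.encard_mono (Set.union_subset h1 h2)) (Set.encard_mono h3)
      _ = S.encard + T.encard := Set.encard_union_add_encard_inter S T
  show ((s.A ∪ t.A) ∩ (s.B ∩ t.B)).encard + ((s.B ∪ t.B) ∩ (s.A ∩ t.A)).encard
      ≤ (s.A ∩ s.B).encard + (t.A ∩ t.B).encard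
  apply key
  · intro x hx
    rcases hx with ⟨h1 | h1, h2, h3⟩
    · exact Or.inl ⟨h1, h2⟩
    · exact Or.inr ⟨h1, h3⟩
  · intro x hx
    rcases hx with ⟨h1 | h1, h2, h3⟩
    · exact Or.inl ⟨h2, h1⟩
    · exact Or.inr ⟨h3, h1⟩
  · intro x hx
    rcases hx with ⟨⟨-, hsB, htB⟩, ⟨-, hsA, htA⟩⟩
    exact ⟨⟨hsA, hsB⟩, ⟨htA, htB⟩⟩

lemma dist_symm {u : GraphSep G} {R R' : Set (GraphSep G)}
    (h : Distinguishes u R R') : Distinguishes u R' R := by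
  rcases h with ⟨h1, h2⟩ | ⟨h1, h2⟩
  · exact Or.inr ⟨h2, h1⟩
  · exact Or.inl ⟨h2, h1⟩

lemma effdist_symm {u : GraphSep G} {R R' : Set (GraphSep G)}
    (h : EffDist u R R') : EffDist u R' R :=
  ⟨dist_symm h.1, fun v hv => h.2 v (dist_symm hv)⟩

lemma pin {k a b : ℕ∞} (hk : k ≠ ⊤) (ha : k ≤ a) (hb : k ≤ b)
    (hab : a + b ≤ k + k) : a ≤ k ∧ b ≤ k := by
  constructor
  · have h1 : a + k ≤ k + k := le_trans (add_le_add_right hb a) hab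
    exact (WithTop.add_le_add_iff_right hk).mp h1
  · have h1 : k + b ≤ k + k := le_trans (add_le_add_left ha b) hab
    exact (WithTop.add_le_add_iff_left hk).mp h1

/-- The key membership lemma: if `x, y ∈ R` and `x⁻¹ ∈ R'`, and the join is orientable
in both profiles, then the join lies in `R` and its inverse in `R'`. -/
lemma joinMem {kR kR' : ℕ∞} {R R' : Set (GraphSep G)}
    (hR : IsProfile kR R) (hR' : IsProfile kR' R')
    (x y : GraphSep G) (hx : x ∈ R) (hy : y ∈ R) (hx' : x.inv ∈ R')
    (ho : (x.join y).order < kR) (ho' : (x.join y).order < kR') :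
    x.join y ∈ R ∧ (x.join y).inv ∈ R' := by
  have huR : x.join y ∈ R := by
    rcases hR.1.2.1 (x.join y) ho with h | h
    · exact h
    · exact absurd h (hR.2.2 x hx y hy)
  refine ⟨huR, ?_⟩
  rcases hR'.1.2.1 (x.join y) ho' with h | h
  · have hcons := hR'.2.1 x.inv hx' (x.join y) h (le_join x y)
    rcases hcons with h1 | h1
    · -- x.inv = x.join y
      have hxinvR : x.inv ∈ R := by rw [h1]; exact huR
      have hxx : x.inv = x := hR.1.2.2 x hx hxinvR
      rw [← h1]
      show x ∈ R'
      rw [← hxx]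
      exact hx'
    · -- x.inv = (x.join y).inv
      rw [← h1]; exact hx'
  · exact h

lemma goodCorner {k kR kR' : ℕ∞} {R R' : Set (GraphSep G)}
    (hR : IsProfile kR R) (hR' : IsProfile kR' R')
    (hkR : k < kR) (hkR' : k < kR')
    (hmin : ∀ v : GraphSep G, Distinguishes v R R' → k ≤ v.order)
    (x y : GraphSep G) (hx : x ∈ R) (hy : y ∈ R) (hx' : x.inv ∈ R') :
    k ≤ (x.join y).order ∧ ((x.join y).order ≤ k → EffDist (x.join y) R R') := by
  constructor
  · by_contra hcon
    have hlt : (x.join y).order < k := lt_of_not_ge hcon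
    obtain ⟨hm, hm'⟩ := joinMem hR hR' x y hx hy hx' (lt_trans hlt hkR) (lt_trans hlt hkR')
    exact absurd (hmin (x.join y) (Or.inl ⟨hm, hm'⟩)) (not_le.mpr hlt)
  · intro hle
    obtain ⟨hm, hm'⟩ := joinMem hR hR' x y hx hy hx'
      (lt_of_le_of_lt hle hkR) (lt_of_le_of_lt hle hkR')
    exact ⟨Or.inl ⟨hm, hm'⟩, fun v hv => le_trans hle (hmin v hv)⟩

lemma oppPair_inv_left {s t c d : GraphSep G} :
    OppPair s.inv t c d ↔ OppPair s t c d := by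
  unfold OppPair
  simp only [inv_inv]
  tauto

lemma oppPair_inv_right {s t c d : GraphSep G} :
    OppPair s t.inv c d ↔ OppPair s t c d := by
  unfold OppPair
  simp only [inv_inv]
  tauto

theorem stmt12core {P P' Q Q' : Set (GraphSep G)} {kP kP' kQ kQ' : ℕ∞}
    (hP : IsProfile kP P) (hP' : IsProfile kP' P')
    (hQ : IsProfile kQ Q) (hQ' : IsProfile kQ' Q')
    (s t : GraphSep G)
    (hsP : s ∈ P) (hsP' : s.inv ∈ P') (htQ : t ∈ Q) (htQ' : t.inv ∈ Q')
    (hminP : ∀ v : GraphSep G, Distinguishes v P P' → s.order ≤ v.order)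
    (hminQ : ∀ v : GraphSep G, Distinguishes v Q Q' → t.order ≤ v.order)
    (heq : s.order = t.order) :
    (∃ c d : GraphSep G, OppPair s t c d ∧ EffDist c P P' ∧ EffDist d Q Q') ∨
    (∃ c₁ d₁ c₂ d₂ : GraphSep G, OppPair s t c₁ d₁ ∧ OppPair s t c₂ d₂ ∧
      EffDist c₁ P P' ∧ EffDist d₁ P P' ∧ EffDist c₂ Q Q' ∧ EffDist d₂ Q Q') := by
  have hkP : s.order < kP := hP.1.1 s hsP
  have hkP' : s.order < kP' := by
    have := hP'.1.1 s.inv hsP'; rwa [order_inv] at this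
  have hkQ : s.order < kQ := by rw [heq]; exact hQ.1.1 t htQ
  have hkQ' : s.order < kQ' := by
    rw [heq]; have := hQ'.1.1 t.inv htQ'; rwa [order_inv] at this
  have hktop : s.order ≠ ⊤ := ne_top_of_lt hkP
  have hminQ' : ∀ v : GraphSep G, Distinguishes v Q Q' → s.order ≤ v.order := by
    intro v hv; rw [heq]; exact hminQ v hv
  -- the four packaged good-corner facts
  have PkgP : ∀ y ∈ P, s.order ≤ (s.join y).order ∧
      ((s.join y).order ≤ s.order → EffDist (s.join y) P P') :=
    fun y hy => goodCorner hP hP' hkP hkP' hminP s y hsP hy hsP'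
  have PkgP' : ∀ y ∈ P', s.order ≤ (s.inv.join y).order ∧
      ((s.inv.join y).order ≤ s.order → EffDist (s.inv.join y) P P') := by
    intro y hy
    have hmin' : ∀ v : GraphSep G, Distinguishes v P' P → s.order ≤ v.order :=
      fun v hv => hminP v (dist_symm hv)
    have := goodCorner hP' hP hkP' hkP hmin' s.inv y hsP' hy hsP
    exact ⟨this.1, fun h => effdist_symm (this.2 h)⟩
  have PkgQ : ∀ y ∈ Q, s.order ≤ (y.join t).order ∧
      ((y.join t).order ≤ s.order → EffDist (y.join t) Q Q') := by
    intro y hy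
    have := goodCorner hQ hQ' hkQ hkQ' hminQ' t y htQ hy htQ'
    rwa [join_comm t y] at this
  have PkgQ' : ∀ y ∈ Q', s.order ≤ (y.join t.inv).order ∧
      ((y.join t.inv).order ≤ s.order → EffDist (y.join t.inv) Q Q') := by
    intro y hy
    have hmin' : ∀ v : GraphSep G, Distinguishes v Q' Q → s.order ≤ v.order :=
      fun v hv => hminQ' v (dist_symm hv)
    have := goodCorner hQ' hQ hkQ' hkQ hmin' t.inv y htQ' hy htQ
    rw [join_comm t.inv y] at this
    exact ⟨this.1, fun h => effdist_symm (this.2 h)⟩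
  -- submodularity for the two opposite pairs
  have hsum1 : (s.join t).order + (s.inv.join t.inv).order ≤ s.order + s.order := by
    have := submod s t; rwa [← heq] at this
  have hsum2 : (s.join t.inv).order + (s.inv.join t).order ≤ s.order + s.order := by
    have := submod s t.inv
    simp only [inv_inv, order_inv] at this
    rwa [← heq] at this
  -- orientations of t in P, P' and of s in Q, Q'
  have htP : t ∈ P ∨ t.inv ∈ P := hP.1.2.1 t (by rw [← heq]; exact hkP)
  have htP' : t ∈ P' ∨ t.inv ∈ P' := hP'.1.2.1 t (by rw [← heq]; exact hkP')
  have hsQ : s ∈ Q ∨ s.inv ∈ Q := hQ.1.2.1 s hkQ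
  have hsQ' : s ∈ Q' ∨ s.inv ∈ Q' := hQ'.1.2.1 s hkQ'
  rcases htP with h1 | h1 <;> rcases htP' with h2 | h2 <;>
    rcases hsQ with h3 | h3 <;> rcases hsQ' with h4 | h4
  -- 1: LLLL → disjunct 4
  · obtain ⟨hc1, hc2⟩ := PkgP' t h2
    obtain ⟨hd1, hd2⟩ := PkgQ' s h4
    obtain ⟨ha, hb⟩ := pin hktop hd1 hc1 hsum2
    exact Or.inl ⟨_, _, Or.inr (Or.inr (Or.inr ⟨rfl, rfl⟩)), hc2 hb, hd2 ha⟩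
  -- 2: LLLR → disjunct 1
  · obtain ⟨hc1, hc2⟩ := PkgP t h1
    obtain ⟨hd1, hd2⟩ := PkgQ' s.inv h4
    obtain ⟨ha, hb⟩ := pin hktop hc1 hd1 hsum1
    exact Or.inl ⟨_, _, Or.inl ⟨rfl, rfl⟩, hc2 ha, hd2 hb⟩
  -- 3: LLRL → disjunct 4
  · obtain ⟨hc1, hc2⟩ := PkgP' t h2
    obtain ⟨hd1, hd2⟩ := PkgQ' s h4
    obtain ⟨ha, hb⟩ := pin hktop hd1 hc1 hsum2
    exact Or.inl ⟨_, _, Or.inr (Or.inr (Or.inr ⟨rfl, rfl⟩)), hc2 hb, hd2 ha⟩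
  -- 4: LLRR → disjunct 1
  · obtain ⟨hc1, hc2⟩ := PkgP t h1
    obtain ⟨hd1, hd2⟩ := PkgQ' s.inv h4
    obtain ⟨ha, hb⟩ := pin hktop hc1 hd1 hsum1
    exact Or.inl ⟨_, _, Or.inl ⟨rfl, rfl⟩, hc2 ha, hd2 hb⟩
  -- 5: LRLL → disjunct 2
  · obtain ⟨hc1, hc2⟩ := PkgP' t.inv h2
    obtain ⟨hd1, hd2⟩ := PkgQ s h3
    obtain ⟨ha, hb⟩ := pin hktop hd1 hc1 hsum1
    exact Or.inl ⟨_, _, Or.inr (Or.inl ⟨rfl, rfl⟩), hc2 hb, hd2 ha⟩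
  -- 6: LRLR → disjunct 1
  · obtain ⟨hc1, hc2⟩ := PkgP t h1
    obtain ⟨hd1, hd2⟩ := PkgQ' s.inv h4
    obtain ⟨ha, hb⟩ := pin hktop hc1 hd1 hsum1
    exact Or.inl ⟨_, _, Or.inl ⟨rfl, rfl⟩, hc2 ha, hd2 hb⟩
  -- 7: LRRL → outcome (ii), type A
  · obtain ⟨ha1, ha2⟩ := PkgP t h1
    obtain ⟨hb1, hb2⟩ := PkgP' t.inv h2
    obtain ⟨hc1, hc2⟩ := PkgQ s.inv h3
    obtain ⟨hd1, hd2⟩ := PkgQ' s h4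
    obtain ⟨hA, hB⟩ := pin hktop ha1 hb1 hsum1
    obtain ⟨hC, hD⟩ := pin hktop hd1 hc1 hsum2
    exact Or.inr ⟨_, _, _, _, Or.inl ⟨rfl, rfl⟩, Or.inr (Or.inr (Or.inr ⟨rfl, rfl⟩)),
      ha2 hA, hb2 hB, hc2 hD, hd2 hC⟩
  -- 8: LRRR → disjunct 1
  · obtain ⟨hc1, hc2⟩ := PkgP t h1
    obtain ⟨hd1, hd2⟩ := PkgQ' s.inv h4
    obtain ⟨ha, hb⟩ := pin hktop hc1 hd1 hsum1
    exact Or.inl ⟨_, _, Or.inl ⟨rfl, rfl⟩, hc2 ha, hd2 hb⟩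
  -- 9: RLLL → disjunct 4
  · obtain ⟨hc1, hc2⟩ := PkgP' t h2
    obtain ⟨hd1, hd2⟩ := PkgQ' s h4
    obtain ⟨ha, hb⟩ := pin hktop hd1 hc1 hsum2
    exact Or.inl ⟨_, _, Or.inr (Or.inr (Or.inr ⟨rfl, rfl⟩)), hc2 hb, hd2 ha⟩
  -- 10: RLLR → outcome (ii), type B
  · obtain ⟨ha1, ha2⟩ := PkgP t.inv h1
    obtain ⟨hb1, hb2⟩ := PkgP' t h2
    obtain ⟨hc1, hc2⟩ := PkgQ s h3
    obtain ⟨hd1, hd2⟩ := PkgQ' s.inv h4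
    obtain ⟨hA, hB⟩ := pin hktop ha1 hb1 hsum2
    obtain ⟨hC, hD⟩ := pin hktop hc1 hd1 hsum1
    exact Or.inr ⟨_, _, _, _, Or.inr (Or.inr (Or.inl ⟨rfl, rfl⟩)), Or.inl ⟨rfl, rfl⟩,
      ha2 hA, hb2 hB, hc2 hC, hd2 hD⟩
  -- 11: RLRL → disjunct 3
  · obtain ⟨hc1, hc2⟩ := PkgP t.inv h1
    obtain ⟨hd1, hd2⟩ := PkgQ s.inv h3
    obtain ⟨ha, hb⟩ := pin hktop hc1 hd1 hsum2
    exact Or.inl ⟨_, _, Or.inr (Or.inr (Or.inl ⟨rfl, rfl⟩)), hc2 ha, hd2 hb⟩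
  -- 12: RLRR → disjunct 3
  · obtain ⟨hc1, hc2⟩ := PkgP t.inv h1
    obtain ⟨hd1, hd2⟩ := PkgQ s.inv h3
    obtain ⟨ha, hb⟩ := pin hktop hc1 hd1 hsum2
    exact Or.inl ⟨_, _, Or.inr (Or.inr (Or.inl ⟨rfl, rfl⟩)), hc2 ha, hd2 hb⟩
  -- 13: RRLL → disjunct 2
  · obtain ⟨hc1, hc2⟩ := PkgP' t.inv h2
    obtain ⟨hd1, hd2⟩ := PkgQ s h3
    obtain ⟨ha, hb⟩ := pin hktop hd1 hc1 hsum1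
    exact Or.inl ⟨_, _, Or.inr (Or.inl ⟨rfl, rfl⟩), hc2 hb, hd2 ha⟩
  -- 14: RRLR → disjunct 2
  · obtain ⟨hc1, hc2⟩ := PkgP' t.inv h2
    obtain ⟨hd1, hd2⟩ := PkgQ s h3
    obtain ⟨ha, hb⟩ := pin hktop hd1 hc1 hsum1
    exact Or.inl ⟨_, _, Or.inr (Or.inl ⟨rfl, rfl⟩), hc2 hb, hd2 ha⟩
  -- 15: RRRL → disjunct 3
  · obtain ⟨hc1, hc2⟩ := PkgP t.inv h1
    obtain ⟨hd1, hd2⟩ := PkgQ s.inv h3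
    obtain ⟨ha, hb⟩ := pin hktop hc1 hd1 hsum2
    exact Or.inl ⟨_, _, Or.inr (Or.inr (Or.inl ⟨rfl, rfl⟩)), hc2 ha, hd2 hb⟩
  -- 16: RRRR → disjunct 3
  · obtain ⟨hc1, hc2⟩ := PkgP t.inv h1
    obtain ⟨hd1, hd2⟩ := PkgQ s.inv h3
    obtain ⟨ha, hb⟩ := pin hktop hc1 hd1 hsum2
    exact Or.inl ⟨_, _, Or.inr (Or.inr (Or.inl ⟨rfl, rfl⟩)), hc2 ha, hd2 hb⟩

end GraphSep

open GraphSep in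
/-- for efficient distinguishers of equal order, either an opposite pair
of corner separations splits between the two sets of efficient distinguishers, or both
opposite pairs occur, one within each. -/
theorem stmt12 {V : Type} (G : SimpleGraph V) (hG : G.Connected)
    (P P' Q Q' : Set (GraphSep G))
    (hP : IsProfileIn G P) (hP' : IsProfileIn G P')
    (hQ : IsProfileIn G Q) (hQ' : IsProfileIn G Q')
    (hPr : RobustP P) (hP'r : RobustP P') (hQr : RobustP Q) (hQ'r : RobustP Q')
    (s t : GraphSep G)
    (hs : EffDist s P P') (ht : EffDist t Q Q')
    (heq : s.order = t.order) :
    (∃ c d : GraphSep G, OppPair s t c d ∧ EffDist c P P' ∧ EffDist d Q Q') ∨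
    (∃ c₁ d₁ c₂ d₂ : GraphSep G, OppPair s t c₁ d₁ ∧ OppPair s t c₂ d₂ ∧
      EffDist c₁ P P' ∧ EffDist d₁ P P' ∧ EffDist c₂ Q Q' ∧ EffDist d₂ Q Q') := by
  obtain ⟨kP, hPp⟩ := hP
  obtain ⟨kP', hP'p⟩ := hP'
  obtain ⟨kQ, hQp⟩ := hQ
  obtain ⟨kQ', hQ'p⟩ := hQ'
  have hminSinv : ∀ v : GraphSep G, Distinguishes v P P' → s.inv.order ≤ v.order := by
    intro v hv; rw [order_inv]; exact hs.2 v hv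
  have hminTinv : ∀ v : GraphSep G, Distinguishes v Q Q' → t.inv.order ≤ v.order := by
    intro v hv; rw [order_inv]; exact ht.2 v hv
  rcases hs.1 with ⟨h1, h2⟩ | ⟨h1, h2⟩ <;> rcases ht.1 with ⟨h3, h4⟩ | ⟨h3, h4⟩
  · exact stmt12core hPp hP'p hQp hQ'p s t h1 h2 h3 h4 hs.2 ht.2 heq
  · have := stmt12core hPp hP'p hQp hQ'p s t.inv h1 h2 h3 h4 hs.2 hminTinv
      (by rw [order_inv]; exact heq)
    simpa only [oppPair_inv_right] using this
  · have := stmt12core hPp hP'p hQp hQ'p s.inv t h1 h2 h3 h4 hminSinv ht.2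
      (by rw [order_inv]; exact heq)
    simpa only [oppPair_inv_left] using this
  · have := stmt12core hPp hP'p hQp hQ'p s.inv t.inv h1 h2 h3 h4 hminSinv hminTinv
      (by rw [order_inv, order_inv]; exact heq)
    simpa only [oppPair_inv_left, oppPair_inv_right] using this
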